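/- Let m ≥ 2 and r ≥ 1 be integers, with I_1 = [1, r(m-1)+1] and I_2 = [r(m-1)+2, 2r(m-1)]. If Δ: I_2 → [1,r] is an L(r)-coloring, then there exists an L(r)-coloring Δ_e of I_1 ∪ I_2 extending Δ such that Δ_e(1) = Δ_e(r(m-1)+1) and |Δ_e^{-1}(t) ∩ [1, r(m-1)]| = m-1 for every color t ∈ [1,r]. -/

import Mathlib

/-- `x` is a monochromatic m-set (indexed 1..m) inside `S` under coloring `Δ`. -/
def IsMonoMSet (m : ℕ) (Δ : ℕ → ℕ) (S : Finset ℕ) (x : ℕ → ℕ) : Prop :=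
  (∀ i j, 1 ≤ i → i < j → j ≤ m → x i < x j) ∧
  (∀ i, 1 ≤ i → i ≤ m → x i ∈ S) ∧
  (∀ i, 1 ≤ i → i ≤ m → Δ (x i) = Δ (x 1))

/-- There exist monochromatic m-sets X ≺ Y in `S` with 2(x_m - x_1) ≤ y_m - x_1. -/
def HasGoodPair (m : ℕ) (Δ : ℕ → ℕ) (S : Finset ℕ) : Prop :=
  ∃ x y : ℕ → ℕ, IsMonoMSet m Δ S x ∧ IsMonoMSet m Δ S y ∧
    x m < y 1 ∧ 2 * (x m - x 1) ≤ y m - x 1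

/-- `g m r` : least N such that every r-coloring of [1,N] has a good pair. -/
noncomputable def g (m r : ℕ) : ℕ :=
  sInf {N | ∀ Δ : ℕ → ℕ, (∀ z ∈ Finset.Icc 1 N, Δ z ∈ Finset.Icc 1 r) →
    HasGoodPair m Δ (Finset.Icc 1 N)}

namespace S4

open Finset

noncomputable def cnt (Δ : ℕ → ℕ) (Q t p : ℕ) : ℕ := ((Finset.Icc (Q+2) p).filter (fun w => Δ w = t)).card

noncomputable def aa (Δ : ℕ → ℕ) (Q t u : ℕ) : ℕ := sInf {p | u ≤ cnt Δ Q t p}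

noncomputable def key (Δ : ℕ → ℕ) (Q σ t u : ℕ) : ℕ :=
  if t = σ then
    if u ≤ 1 then 1
    else if u - 1 ≤ cnt Δ Q t (2*Q) then min Q (2 * aa Δ Q t (u-1) - (2*Q+1)) else Q
  else if u ≤ cnt Δ Q t (2*Q) then min Q (2 * aa Δ Q t u - (2*Q+1)) else Q

def pairs (m r : ℕ) : Finset (ℕ × ℕ) := Finset.Icc 1 r ×ˢ Finset.Icc 1 (m-1)

noncomputable def ψ (m r : ℕ) (Δ : ℕ → ℕ) (Q σ : ℕ) (p : ℕ × ℕ) : ℕ :=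
  key Δ Q σ p.1 p.2 * ((r+2)*m) + (p.1 * m + p.2)

noncomputable def pos (m r : ℕ) (Δ : ℕ → ℕ) (Q σ : ℕ) (p : ℕ × ℕ) : ℕ :=
  ((pairs m r).filter (fun p' => ψ m r Δ Q σ p' ≤ ψ m r Δ Q σ p)).card

noncomputable def ff (m r : ℕ) (Δ : ℕ → ℕ) (Q σ : ℕ) (z : ℕ) : ℕ :=
  if h : ∃ p, p ∈ pairs m r ∧ pos m r Δ Q σ p = z then h.choose.1 else σ

lemma cnt_mono (Δ : ℕ → ℕ) (Q t : ℕ) {p p' : ℕ} (h : p ≤ p') :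
    cnt Δ Q t p ≤ cnt Δ Q t p' :=
  card_le_card (filter_subset_filter _ (Icc_subset_Icc_right h))

lemma aa_le (Δ : ℕ → ℕ) (Q t : ℕ) {u p : ℕ} (h : u ≤ cnt Δ Q t p) :
    aa Δ Q t u ≤ p := Nat.sInf_le h

lemma aa_spec (Δ : ℕ → ℕ) (Q t : ℕ) {u p : ℕ} (h1 : 1 ≤ u) (h2 : u ≤ cnt Δ Q t p) :
    Q + 2 ≤ aa Δ Q t u ∧ Δ (aa Δ Q t u) = t ∧ cnt Δ Q t (aa Δ Q t u) = u := by
  set a := aa Δ Q t u with ha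
  have hmem : u ≤ cnt Δ Q t a := Nat.sInf_mem (⟨p, h2⟩ : {p | u ≤ cnt Δ Q t p}.Nonempty)
  have hge : Q + 2 ≤ a := by
    by_contra hc
    have h0 : cnt Δ Q t a = 0 := by
      unfold cnt
      rw [Finset.Icc_eq_empty (by omega), filter_empty, card_empty]
    omega
  have hprev : cnt Δ Q t (a-1) < u := by
    by_contra hc
    have : a ≤ a - 1 := Nat.sInf_le (show u ≤ cnt Δ Q t (a-1) by omega)
    omega
  have hstep : Finset.Icc (Q+2) a = insert a (Finset.Icc (Q+2) (a-1)) := by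
    ext w; simp only [Finset.mem_Icc, Finset.mem_insert]; omega
  have hΔa : Δ a = t := by
    by_contra hc
    have : cnt Δ Q t a = cnt Δ Q t (a-1) := by
      unfold cnt; rw [hstep, filter_insert, if_neg hc]
    omega
  refine ⟨hge, hΔa, ?_⟩
  have h1' : cnt Δ Q t a ≤ cnt Δ Q t (a-1) + 1 := by
    unfold cnt
    rw [hstep, filter_insert, if_pos hΔa]
    exact card_insert_le _ _
  omega

lemma aa_mono (Δ : ℕ → ℕ) (Q t : ℕ) {u' u p : ℕ} (h : u' ≤ u) (h2 : u ≤ cnt Δ Q t p) :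
    aa Δ Q t u' ≤ aa Δ Q t u :=
  Nat.sInf_le (h.trans (Nat.sInf_mem (⟨p, h2⟩ : {p | u ≤ cnt Δ Q t p}.Nonempty)))

lemma key_bounds (Δ : ℕ → ℕ) (Q σ t : ℕ) {u : ℕ} (hQ1 : 1 ≤ Q) (hu : 1 ≤ u) :
    1 ≤ key Δ Q σ t u ∧ key Δ Q σ t u ≤ Q := by
  unfold key
  split_ifs with h1 h2 h3 h4
  · omega
  · have := (aa_spec Δ Q t (u := u - 1) (by omega) h3).1
    constructor
    · exact le_min hQ1 (by omega)
    · exact min_le_left _ _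
  · omega
  · have := (aa_spec Δ Q t (u := u) hu h4).1
    constructor
    · exact le_min hQ1 (by omega)
    · exact min_le_left _ _
  · omega

lemma key_ge_two (Δ : ℕ → ℕ) (Q σ t : ℕ) {u : ℕ} (hQ2 : 2 ≤ Q) (hu : 1 ≤ u)
    (hne : ¬ (t = σ ∧ u = 1)) : 2 ≤ key Δ Q σ t u := by
  unfold key
  split_ifs with h1 h2 h3 h4
  · exact absurd ⟨h1, by omega⟩ hne
  · have := (aa_spec Δ Q t (u := u - 1) (by omega) h3).1
    exact le_min hQ2 (by omega)
  · omega
  · have := (aa_spec Δ Q t (u := u) hu h4).1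
    exact le_min hQ2 (by omega)
  · omega

lemma key_mono (Δ : ℕ → ℕ) (Q σ t : ℕ) {u' u : ℕ} (hQ1 : 1 ≤ Q) (hu' : 1 ≤ u')
    (h : u' ≤ u) : key Δ Q σ t u' ≤ key Δ Q σ t u := by
  have hub := key_bounds Δ Q σ t hQ1 hu'
  rcases eq_or_ne t σ with hts | hts
  · subst hts
    by_cases h1 : u' ≤ 1
    · have hk : key Δ Q t t u' = 1 := by unfold key; rw [if_pos rfl, if_pos h1]
      have := (key_bounds Δ Q t t hQ1 (show 1 ≤ u by omega)).1
      omega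
    · have h2 : ¬ u ≤ 1 := by omega
      by_cases h3 : u - 1 ≤ cnt Δ Q t (2*Q)
      · have h4 : u' - 1 ≤ cnt Δ Q t (2*Q) := by omega
        have ham : aa Δ Q t (u'-1) ≤ aa Δ Q t (u-1) := aa_mono Δ Q t (by omega) h3
        unfold key
        rw [if_pos rfl, if_pos rfl, if_neg h1, if_neg h2, if_pos h3, if_pos h4]
        exact min_le_min le_rfl (by omega)
      · have hk : key Δ Q t t u = Q := by unfold key; rw [if_pos rfl, if_neg h2, if_neg h3]
        omega
  · by_cases h3 : u ≤ cnt Δ Q t (2*Q)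
    · have h4 : u' ≤ cnt Δ Q t (2*Q) := by omega
      have ham : aa Δ Q t u' ≤ aa Δ Q t u := aa_mono Δ Q t h h3
      unfold key
      rw [if_neg hts, if_neg hts, if_pos h3, if_pos h4]
      exact min_le_min le_rfl (by omega)
    · have hk : key Δ Q σ t u = Q := by unfold key; rw [if_neg hts, if_neg h3]
      omega

lemma hall (m r : ℕ) (Δ : ℕ → ℕ) (Q σ : ℕ) (hm : 2 ≤ m) (hσ1 : 1 ≤ σ) (hσr : σ ≤ r)
    {v : ℕ} (hv1 : 1 ≤ v) (hvq : v + 1 ≤ Q) :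
    ((pairs m r).filter (fun p => key Δ Q σ p.1 p.2 ≤ v)).card ≤ v := by
  classical
  set F := (pairs m r).filter (fun p => key Δ Q σ p.1 p.2 ≤ v) with hF
  have hcard1 : F.card ≤ (F.erase (σ,1)).card + 1 := by
    by_cases h : (σ,1) ∈ F
    · have := Finset.card_erase_add_one h
      omega
    · rw [Finset.erase_eq_of_notMem h]; omega
  have hb : (F.erase (σ,1)).card ≤ (Finset.Icc (Q+2) ((2*Q + v + 1)/2)).card := by
    apply Finset.card_le_card_of_injOn
      (fun p => aa Δ Q p.1 (if p.1 = σ then p.2 - 1 else p.2))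
    · intro p hp
      have hpF := Finset.mem_of_mem_erase hp
      have hpne := Finset.ne_of_mem_erase hp
      rw [hF, Finset.mem_filter] at hpF
      obtain ⟨hppairs, hpkey⟩ := hpF
      rw [pairs, Finset.mem_product, Finset.mem_Icc, Finset.mem_Icc] at hppairs
      obtain ⟨⟨hp11, hp1r⟩, ⟨hp21, hp2m⟩⟩ := hppairs
      set u' : ℕ := if p.1 = σ then p.2 - 1 else p.2 with hu'
      have hkey2 : 1 ≤ u' ∧ u' ≤ cnt Δ Q p.1 (2*Q) ∧
          2 * aa Δ Q p.1 u' ≤ 2*Q + v + 1 := by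
        have hmin : ∀ x : ℕ, min Q x ≤ v → x ≤ v := by
          intro x hx
          rcases min_cases Q x with ⟨h1, h2⟩ | ⟨h1, h2⟩ <;> omega
        rcases eq_or_ne p.1 σ with h1 | h1
        · have hp2 : ¬ p.2 ≤ 1 := by
            intro hc
            exact hpne (by
              have : p.2 = 1 := by omega
              exact Prod.ext (by rw [h1]) this)
          have hu'v : u' = p.2 - 1 := by rw [hu', if_pos h1]
          unfold key at hpkey
          rw [h1, if_pos rfl, if_neg hp2] at hpkey
          by_cases h3 : p.2 - 1 ≤ cnt Δ Q σ (2*Q)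
          · rw [if_pos h3] at hpkey
            have := hmin _ hpkey
            have haage := (aa_spec Δ Q σ (u := p.2 - 1) (by omega) h3).1
            rw [hu'v, h1]
            exact ⟨by omega, h3, by omega⟩
          · rw [if_neg h3] at hpkey; omega
        · have hu'v : u' = p.2 := by rw [hu', if_neg h1]
          unfold key at hpkey
          rw [if_neg h1] at hpkey
          by_cases h3 : p.2 ≤ cnt Δ Q p.1 (2*Q)
          · rw [if_pos h3] at hpkey
            have := hmin _ hpkey
            have haage := (aa_spec Δ Q p.1 (u := p.2) (by omega) h3).1
            rw [hu'v]
            exact ⟨by omega, h3, by omega⟩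
          · rw [if_neg h3] at hpkey; omega
      obtain ⟨hu1, hucnt, haale⟩ := hkey2
      have hspec := aa_spec Δ Q p.1 hu1 hucnt
      rw [Finset.mem_coe, Finset.mem_Icc]; beta_reduce; rw [← hu']
      refine ⟨hspec.1, ?_⟩
      rw [Nat.le_div_iff_mul_le (by norm_num)]
      omega
    · intro p hp p' hp' heq
      have hpF := Finset.mem_of_mem_erase hp
      have hpF' := Finset.mem_of_mem_erase hp'
      have hpne := Finset.ne_of_mem_erase hp
      have hpne' := Finset.ne_of_mem_erase hp'
      rw [hF, Finset.mem_filter] at hpF hpF'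
      obtain ⟨hppairs, hpkey⟩ := hpF
      obtain ⟨hppairs', hpkey'⟩ := hpF'
      rw [pairs, Finset.mem_product, Finset.mem_Icc, Finset.mem_Icc] at hppairs hppairs'
      -- recover branch info again
      have hinfo : ∀ p'' : ℕ × ℕ, (1 ≤ p''.1 ∧ p''.1 ≤ r) ∧ 1 ≤ p''.2 ∧ p''.2 ≤ m - 1 →
          key Δ Q σ p''.1 p''.2 ≤ v → p'' ≠ (σ, 1) →
          1 ≤ (if p''.1 = σ then p''.2 - 1 else p''.2) ∧
          (if p''.1 = σ then p''.2 - 1 else p''.2) ≤ cnt Δ Q p''.1 (2*Q) := by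
        intro p'' hpp hk hne
        have hmin : ∀ x : ℕ, min Q x ≤ v → x ≤ v := by
          intro x hx
          rcases min_cases Q x with ⟨h1, h2⟩ | ⟨h1, h2⟩ <;> omega
        rcases eq_or_ne p''.1 σ with h1 | h1
        · have hp2 : ¬ p''.2 ≤ 1 := by
            intro hc
            exact hne (by
              have : p''.2 = 1 := by omega
              exact Prod.ext (by rw [h1]) this)
          unfold key at hk
          rw [h1, if_pos rfl, if_neg hp2] at hk
          rw [if_pos h1]
          by_cases h3 : p''.2 - 1 ≤ cnt Δ Q σ (2*Q)
          · rw [h1]; exact ⟨by omega, h3⟩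
          · rw [if_neg h3] at hk; omega
        · unfold key at hk
          rw [if_neg h1] at hk
          rw [if_neg h1]
          by_cases h3 : p''.2 ≤ cnt Δ Q p''.1 (2*Q)
          · exact ⟨by omega, h3⟩
          · rw [if_neg h3] at hk; omega
      obtain ⟨hu1, hucnt⟩ := hinfo p ⟨hppairs.1, hppairs.2⟩ hpkey hpne
      obtain ⟨hu1', hucnt'⟩ := hinfo p' ⟨hppairs'.1, hppairs'.2⟩ hpkey' hpne'
      have hs := aa_spec Δ Q p.1 hu1 hucnt
      have hs' := aa_spec Δ Q p'.1 hu1' hucnt'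
      simp only at heq
      have ht : p.1 = p'.1 := by
        rw [← hs.2.1, ← hs'.2.1, heq]
      have hu : (if p.1 = σ then p.2 - 1 else p.2) = (if p'.1 = σ then p'.2 - 1 else p'.2) := by
        rw [← hs.2.2, ← hs'.2.2, heq, ht]
      rcases eq_or_ne p.1 σ with h1 | h1
      · rw [if_pos h1, if_pos (ht ▸ h1)] at hu
        have h2 : ¬ p.2 ≤ 1 := by
          intro hc
          exact hpne (Prod.ext h1 (by omega))
        have h2' : ¬ p'.2 ≤ 1 := by
          intro hc
          exact hpne' (Prod.ext (ht ▸ h1) (by omega))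
        exact Prod.ext ht (by omega)
      · rw [if_neg h1, if_neg (ht ▸ h1)] at hu
        exact Prod.ext ht hu
  have hIcc : (Finset.Icc (Q+2) ((2*Q + v + 1)/2)).card = (2*Q + v + 1)/2 + 1 - (Q+2) := by
    rw [Nat.card_Icc]
  omega

lemma mem_pairs (m r : ℕ) {p : ℕ × ℕ} :
    p ∈ pairs m r ↔ (1 ≤ p.1 ∧ p.1 ≤ r) ∧ 1 ≤ p.2 ∧ p.2 ≤ m - 1 := by
  rw [pairs, Finset.mem_product, Finset.mem_Icc, Finset.mem_Icc]

lemma snd_lt (m r : ℕ) {p : ℕ × ℕ} (hm : 2 ≤ m) (hp : p ∈ pairs m r) :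
    p.1 * m + p.2 < (r+2)*m := by
  rw [mem_pairs] at hp
  have h1 : p.1 * m ≤ r * m := Nat.mul_le_mul_right m hp.1.2
  have h2 : (r+2) * m = r * m + 2 * m := by ring
  omega

lemma key_le_of_psi_le (m r : ℕ) (Δ : ℕ → ℕ) (Q σ : ℕ) (hm : 2 ≤ m)
    {p p' : ℕ × ℕ} (hp : p ∈ pairs m r) (hp' : p' ∈ pairs m r)
    (h : ψ m r Δ Q σ p' ≤ ψ m r Δ Q σ p) :
    key Δ Q σ p'.1 p'.2 ≤ key Δ Q σ p.1 p.2 := by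
  by_contra hc
  have hB := snd_lt m r hm hp
  have hB' := snd_lt m r hm hp'
  have hmul : (key Δ Q σ p.1 p.2 + 1) * ((r+2)*m) ≤ key Δ Q σ p'.1 p'.2 * ((r+2)*m) :=
    Nat.mul_le_mul_right _ (by omega)
  rw [add_mul, one_mul] at hmul
  unfold ψ at h
  omega

lemma psi_inj (m r : ℕ) (Δ : ℕ → ℕ) (Q σ : ℕ) (hm : 2 ≤ m)
    {p p' : ℕ × ℕ} (hp : p ∈ pairs m r) (hp' : p' ∈ pairs m r)
    (h : ψ m r Δ Q σ p = ψ m r Δ Q σ p') : p = p' := by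
  have h1 := key_le_of_psi_le m r Δ Q σ hm hp hp' h.ge
  have h2 := key_le_of_psi_le m r Δ Q σ hm hp' hp h.le
  have hkey : key Δ Q σ p.1 p.2 = key Δ Q σ p'.1 p'.2 := le_antisymm h2 h1
  unfold ψ at h
  rw [hkey] at h
  have hsum : p.1 * m + p.2 = p'.1 * m + p'.2 := by omega
  rw [mem_pairs] at hp hp'
  rcases Nat.lt_trichotomy p.1 p'.1 with ht | ht | ht
  · exfalso
    have : (p.1 + 1) * m ≤ p'.1 * m := Nat.mul_le_mul_right m (by omega)
    rw [add_mul, one_mul] at this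
    omega
  · refine Prod.ext ht ?_
    have : p.1 * m = p'.1 * m := by rw [ht]
    omega
  · exfalso
    have : (p'.1 + 1) * m ≤ p.1 * m := Nat.mul_le_mul_right m (by omega)
    rw [add_mul, one_mul] at this
    omega

lemma pos_ge_one (m r : ℕ) (Δ : ℕ → ℕ) (Q σ : ℕ) {p : ℕ × ℕ} (hp : p ∈ pairs m r) :
    1 ≤ pos m r Δ Q σ p := by
  rw [pos]
  have : p ∈ (pairs m r).filter (fun p' => ψ m r Δ Q σ p' ≤ ψ m r Δ Q σ p) :=
    Finset.mem_filter.mpr ⟨hp, le_rfl⟩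
  exact Finset.card_pos.mpr ⟨p, this⟩

lemma card_pairs (m r : ℕ) : (pairs m r).card = r * (m - 1) := by
  rw [pairs, Finset.card_product, Nat.card_Icc, Nat.card_Icc]
  congr 1 <;> omega

lemma pos_le_q (m r : ℕ) (Δ : ℕ → ℕ) (Q σ : ℕ) (p : ℕ × ℕ) :
    pos m r Δ Q σ p ≤ r * (m - 1) := by
  rw [pos, ← card_pairs m r]
  exact Finset.card_le_card (Finset.filter_subset _ _)

lemma pos_mono (m r : ℕ) (Δ : ℕ → ℕ) (Q σ : ℕ) {p p' : ℕ × ℕ}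
    (h : ψ m r Δ Q σ p ≤ ψ m r Δ Q σ p') :
    pos m r Δ Q σ p ≤ pos m r Δ Q σ p' := by
  unfold pos
  apply Finset.card_le_card
  intro a ha
  rw [Finset.mem_filter] at ha ⊢
  exact ⟨ha.1, le_trans ha.2 h⟩

lemma pos_strict_mono (m r : ℕ) (Δ : ℕ → ℕ) (Q σ : ℕ) {p p' : ℕ × ℕ}
    (hp' : p' ∈ pairs m r) (h : ψ m r Δ Q σ p < ψ m r Δ Q σ p') :
    pos m r Δ Q σ p < pos m r Δ Q σ p' := by
  unfold pos
  apply Finset.card_lt_card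
  have hsub : (pairs m r).filter (fun a => ψ m r Δ Q σ a ≤ ψ m r Δ Q σ p) ⊆
      (pairs m r).filter (fun a => ψ m r Δ Q σ a ≤ ψ m r Δ Q σ p') := by
    intro a ha
    rw [Finset.mem_filter] at ha ⊢
    exact ⟨ha.1, le_trans ha.2 h.le⟩
  rw [Finset.ssubset_iff_of_subset hsub]
  exact ⟨p', Finset.mem_filter.mpr ⟨hp', le_rfl⟩, by
    rw [Finset.mem_filter]
    rintro ⟨-, hle⟩
    omega⟩

lemma pos_injOn (m r : ℕ) (Δ : ℕ → ℕ) (Q σ : ℕ) (hm : 2 ≤ m) {p p' : ℕ × ℕ}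
    (hp : p ∈ pairs m r) (hp' : p' ∈ pairs m r)
    (h : pos m r Δ Q σ p = pos m r Δ Q σ p') : p = p' := by
  rcases Nat.lt_trichotomy (ψ m r Δ Q σ p) (ψ m r Δ Q σ p') with hψ | hψ | hψ
  · exact absurd h (Nat.ne_of_lt (pos_strict_mono m r Δ Q σ hp' hψ))
  · exact psi_inj m r Δ Q σ hm hp hp' hψ
  · exact absurd h.symm (Nat.ne_of_lt (pos_strict_mono m r Δ Q σ hp hψ))

lemma pos_le_key (m r : ℕ) (Δ : ℕ → ℕ) (Q σ : ℕ) (hm : 2 ≤ m)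
    (hσ1 : 1 ≤ σ) (hσr : σ ≤ r) {p : ℕ × ℕ} (hp : p ∈ pairs m r)
    (hQ1 : 1 ≤ Q) (hk : key Δ Q σ p.1 p.2 + 1 ≤ Q) :
    pos m r Δ Q σ p ≤ key Δ Q σ p.1 p.2 := by
  have hsub : (pairs m r).filter (fun p' => ψ m r Δ Q σ p' ≤ ψ m r Δ Q σ p) ⊆
      (pairs m r).filter (fun p' => key Δ Q σ p'.1 p'.2 ≤ key Δ Q σ p.1 p.2) := by
    intro a ha
    rw [Finset.mem_filter] at ha ⊢
    exact ⟨ha.1, key_le_of_psi_le m r Δ Q σ hm hp ha.1 ha.2⟩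
  have hk1 : 1 ≤ key Δ Q σ p.1 p.2 :=
    (key_bounds Δ Q σ p.1 hQ1 ((mem_pairs m r).mp hp).2.1).1
  calc pos m r Δ Q σ p ≤ _ := Finset.card_le_card hsub
    _ ≤ key Δ Q σ p.1 p.2 := hall m r Δ Q σ hm hσ1 hσr hk1 hk

lemma ff_pos (m r : ℕ) (Δ : ℕ → ℕ) (Q σ : ℕ) (hm : 2 ≤ m) {p : ℕ × ℕ}
    (hp : p ∈ pairs m r) : ff m r Δ Q σ (pos m r Δ Q σ p) = p.1 := by
  rw [ff]
  have h : ∃ p', p' ∈ pairs m r ∧ pos m r Δ Q σ p' = pos m r Δ Q σ p := ⟨p, hp, rfl⟩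
  rw [dif_pos h]
  obtain ⟨hmem, heq⟩ := h.choose_spec
  rw [pos_injOn m r Δ Q σ hm hmem hp heq]

lemma pos_surj (m r : ℕ) (Δ : ℕ → ℕ) (Q σ : ℕ) (hm : 2 ≤ m) {z : ℕ}
    (hz1 : 1 ≤ z) (hz2 : z ≤ r * (m-1)) : ∃ p, p ∈ pairs m r ∧ pos m r Δ Q σ p = z := by
  have himg : (pairs m r).image (pos m r Δ Q σ) = Finset.Icc 1 (r*(m-1)) := by
    apply Finset.eq_of_subset_of_card_le
    · intro w hw
      rw [Finset.mem_image] at hw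
      obtain ⟨p, hp, rfl⟩ := hw
      rw [Finset.mem_Icc]
      exact ⟨pos_ge_one m r Δ Q σ hp, pos_le_q m r Δ Q σ p⟩
    · rw [Finset.card_image_of_injOn (fun p hp p' hp' h => pos_injOn m r Δ Q σ hm hp hp' h),
        card_pairs, Nat.card_Icc]
      omega
  have : z ∈ (pairs m r).image (pos m r Δ Q σ) := by
    rw [himg, Finset.mem_Icc]; exact ⟨hz1, hz2⟩
  rw [Finset.mem_image] at this
  obtain ⟨p, hp, hpz⟩ := this
  exact ⟨p, hp, hpz⟩

lemma ff_range (m r : ℕ) (Δ : ℕ → ℕ) (Q σ : ℕ) (hm : 2 ≤ m) {z : ℕ}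
    (hz1 : 1 ≤ z) (hz2 : z ≤ r * (m-1)) :
    1 ≤ ff m r Δ Q σ z ∧ ff m r Δ Q σ z ≤ r := by
  obtain ⟨p, hp, hpz⟩ := pos_surj m r Δ Q σ hm hz1 hz2
  rw [← hpz, ff_pos m r Δ Q σ hm hp]
  exact ⟨((mem_pairs m r).mp hp).1.1, ((mem_pairs m r).mp hp).1.2⟩

lemma class_card (m r : ℕ) (Δ : ℕ → ℕ) (Q σ : ℕ) (hm : 2 ≤ m) {t : ℕ}
    (ht1 : 1 ≤ t) (htr : t ≤ r) :
    ((Finset.Icc 1 (r*(m-1))).filter (fun z => ff m r Δ Q σ z = t)).card = m - 1 := by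
  have heq : (Finset.Icc 1 (r*(m-1))).filter (fun z => ff m r Δ Q σ z = t) =
      ((pairs m r).filter (fun p => p.1 = t)).image (pos m r Δ Q σ) := by
    ext z
    rw [Finset.mem_filter, Finset.mem_image, Finset.mem_Icc]
    constructor
    · rintro ⟨⟨hz1, hz2⟩, hzt⟩
      obtain ⟨p, hp, hpz⟩ := pos_surj m r Δ Q σ hm hz1 hz2
      refine ⟨p, Finset.mem_filter.mpr ⟨hp, ?_⟩, hpz⟩
      rw [← hpz, ff_pos m r Δ Q σ hm hp] at hzt
      exact hzt
    · rintro ⟨p, hp, rfl⟩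
      rw [Finset.mem_filter] at hp
      exact ⟨⟨pos_ge_one m r Δ Q σ hp.1, pos_le_q m r Δ Q σ p⟩,
        by rw [ff_pos m r Δ Q σ hm hp.1, hp.2]⟩
  rw [heq, Finset.card_image_of_injOn
    (fun p hp p' hp' h => pos_injOn m r Δ Q σ hm
      (Finset.mem_filter.mp hp).1 (Finset.mem_filter.mp hp').1 h)]
  have : (pairs m r).filter (fun p => p.1 = t) = {t} ×ˢ Finset.Icc 1 (m-1) := by
    ext p
    rw [Finset.mem_filter, mem_pairs, Finset.mem_product, Finset.mem_singleton,
      Finset.mem_Icc]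
    constructor
    · rintro ⟨⟨-, h2⟩, h3⟩; exact ⟨h3, h2⟩
    · rintro ⟨h1, h2⟩; exact ⟨⟨⟨by omega, by omega⟩, h2⟩, h1⟩
  rw [this, Finset.card_product, Finset.card_singleton, Nat.card_Icc, one_mul]
  omega

lemma ff_one (m r : ℕ) (Δ : ℕ → ℕ) (Q σ : ℕ) (hm : 2 ≤ m) (hr : 1 ≤ r)
    (hQ : Q = r * (m-1)) (hσ1 : 1 ≤ σ) (hσr : σ ≤ r) :
    ff m r Δ Q σ 1 = σ := by
  have hσp : (σ, 1) ∈ pairs m r := (mem_pairs m r).mpr ⟨⟨hσ1, hσr⟩, le_rfl, by omega⟩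
  have hpos1 : pos m r Δ Q σ (σ, 1) = 1 := by
    rw [pos]
    have : (pairs m r).filter (fun p' => ψ m r Δ Q σ p' ≤ ψ m r Δ Q σ (σ, 1)) = {(σ,1)} := by
      apply Finset.eq_singleton_iff_unique_mem.mpr
      refine ⟨Finset.mem_filter.mpr ⟨hσp, le_rfl⟩, ?_⟩
      intro p hp
      rw [Finset.mem_filter] at hp
      obtain ⟨hppairs, hple⟩ := hp
      by_contra hne
      have hkey1 : key Δ Q σ σ 1 = 1 := by unfold key; rw [if_pos rfl, if_pos le_rfl]
      have hQ1 : 1 ≤ Q := by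
        rw [hQ]; exact Nat.mul_pos (by omega) (by omega)
      by_cases hQ2 : 2 ≤ Q
      · have hk2 : 2 ≤ key Δ Q σ p.1 p.2 := by
          apply key_ge_two Δ Q σ p.1 hQ2 ((mem_pairs m r).mp hppairs).2.1
          rintro ⟨h1, h2⟩
          exact hne (Prod.ext h1 h2)
        have := key_le_of_psi_le m r Δ Q σ hm hσp hppairs hple
        rw [hkey1] at this
        omega
      · -- Q = 1 : r = 1 and m = 2
        have hQeq : Q = 1 := by omega
        have hmul : r * (m-1) = 1 := by omega
        have hr1 : r = 1 := by
          by_contra hc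
          have h2 : 2 ≤ r := by omega
          have h3 : 2 * (m-1) ≤ r * (m-1) := Nat.mul_le_mul_right _ h2
          omega
        have hm1 : m - 1 = 1 := by rw [hr1, one_mul] at hmul; exact hmul
        have hp1 : p = (σ, 1) := by
          have := (mem_pairs m r).mp hppairs
          have hσ : σ = 1 := by omega
          apply Prod.ext <;> omega
        exact hne hp1
    rw [this, Finset.card_singleton]
  rw [← hpos1, ff_pos m r Δ Q σ hm hσp]

lemma count_ge (m r : ℕ) (Δ : ℕ → ℕ) (Q σ : ℕ) (hm : 2 ≤ m)
    (hQ : Q = r * (m-1)) (hσ1 : 1 ≤ σ) (hσr : σ ≤ r) {t u v : ℕ}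
    (ht1 : 1 ≤ t) (htr : t ≤ r) (hu1 : 1 ≤ u) (hum : u ≤ m - 1)
    (hkey : key Δ Q σ t u ≤ v) (hv : v + 1 ≤ Q) :
    u ≤ ((Finset.Icc 1 v).filter (fun z => ff m r Δ Q σ z = t)).card := by
  have hQ1 : 1 ≤ Q := by omega
  have hcard : (Finset.Icc 1 u).card = u := by rw [Nat.card_Icc]; omega
  rw [← hcard]
  apply Finset.card_le_card_of_injOn (fun u' => pos m r Δ Q σ (t, u'))
  · intro u' hu'
    rw [Finset.mem_coe, Finset.mem_Icc] at hu'
    have hpmem : (t, u') ∈ pairs m r := (mem_pairs m r).mpr ⟨⟨ht1, htr⟩, hu'.1, by omega⟩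
    have hpmem2 : (t, u) ∈ pairs m r := (mem_pairs m r).mpr ⟨⟨ht1, htr⟩, hu1, hum⟩
    have hkmono : key Δ Q σ t u' ≤ key Δ Q σ t u := key_mono Δ Q σ t hQ1 hu'.1 hu'.2
    have hψ : ψ m r Δ Q σ (t, u') ≤ ψ m r Δ Q σ (t, u) := by
      show key Δ Q σ t u' * ((r+2)*m) + (t * m + u') ≤ key Δ Q σ t u * ((r+2)*m) + (t * m + u)
      have := Nat.mul_le_mul_right ((r+2)*m) hkmono
      omega
    have hple : pos m r Δ Q σ (t, u') ≤ pos m r Δ Q σ (t, u) := pos_mono m r Δ Q σ hψ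
    have hkle : pos m r Δ Q σ (t, u) ≤ key Δ Q σ t u :=
      pos_le_key m r Δ Q σ hm hσ1 hσr hpmem2 hQ1 (show key Δ Q σ t u + 1 ≤ Q by omega)
    rw [Finset.mem_coe, Finset.mem_filter, Finset.mem_Icc]
    exact ⟨⟨pos_ge_one m r Δ Q σ hpmem, le_trans hple (le_trans hkle hkey)⟩,
      ff_pos m r Δ Q σ hm hpmem⟩
  · intro a ha b hb hab
    rw [Finset.coe_Icc, Set.mem_Icc] at ha hb
    have hpa : (t, a) ∈ pairs m r := (mem_pairs m r).mpr ⟨⟨ht1, htr⟩, ha.1, by omega⟩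
    have hpb : (t, b) ∈ pairs m r := (mem_pairs m r).mpr ⟨⟨ht1, htr⟩, hb.1, by omega⟩
    have := pos_injOn m r Δ Q σ hm hpa hpb hab
    exact (Prod.ext_iff.mp this).2

end S4

open S4 in
theorem stmt4 (m r : ℕ) (hm : 2 ≤ m) (hr : 1 ≤ r) (Δ : ℕ → ℕ)
    (hΔ : ∀ z ∈ Finset.Icc (r * (m - 1) + 2) (2 * r * (m - 1)),
      Δ z ∈ Finset.Icc 1 r)
    (hL : ¬ HasGoodPair m Δ (Finset.Icc (r * (m - 1) + 2) (2 * r * (m - 1)))) :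
    ∃ Δe : ℕ → ℕ,
      (∀ z ∈ Finset.Icc 1 (2 * r * (m - 1)), Δe z ∈ Finset.Icc 1 r) ∧
      (∀ z ∈ Finset.Icc (r * (m - 1) + 2) (2 * r * (m - 1)), Δe z = Δ z) ∧
      ¬ HasGoodPair m Δe (Finset.Icc 1 (2 * r * (m - 1))) ∧
      Δe 1 = Δe (r * (m - 1) + 1) ∧
      (∀ t ∈ Finset.Icc 1 r,
        ((Finset.Icc 1 (r * (m - 1))).filter (fun z => Δe z = t)).card = m - 1) := by
  classical
  set Q := r * (m - 1) with hQdef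
  have h2Q : 2 * r * (m - 1) = 2 * Q := by rw [hQdef]; ring
  rw [h2Q] at hΔ hL ⊢
  have hQ1 : 1 ≤ Q := by
    rw [hQdef]; exact Nat.mul_pos (by omega) (by omega)
  have hσex : ∃ t, (1 ≤ t ∧ t ≤ r) ∧ cnt Δ Q t (2*Q) ≤ m - 2 := by
    by_contra hc
    push_neg at hc
    have hsum : (Finset.Icc (Q+2) (2*Q)).card =
        ∑ t ∈ Finset.Icc 1 r, ((Finset.Icc (Q+2) (2*Q)).filter (fun w => Δ w = t)).card :=
      Finset.card_eq_sum_card_fiberwise (fun x hx => hΔ x hx)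
    have hge : ∀ t ∈ Finset.Icc 1 r,
        m - 1 ≤ ((Finset.Icc (Q+2) (2*Q)).filter (fun w => Δ w = t)).card := by
      intro t ht
      rw [Finset.mem_Icc] at ht
      have := hc t ⟨ht.1, ht.2⟩
      unfold cnt at this
      omega
    have hsum2 : r * (m-1) ≤
        ∑ t ∈ Finset.Icc 1 r, ((Finset.Icc (Q+2) (2*Q)).filter (fun w => Δ w = t)).card := by
      calc r * (m-1) = ∑ _t ∈ Finset.Icc 1 r, (m-1) := by
            rw [Finset.sum_const, Nat.card_Icc, smul_eq_mul]
            congr 1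
        _ ≤ _ := Finset.sum_le_sum hge
    have hcard : (Finset.Icc (Q+2) (2*Q)).card = Q - 1 := by rw [Nat.card_Icc]; omega
    omega
  obtain ⟨σ, ⟨hσ1, hσr⟩, hσc⟩ := hσex
  set f : ℕ → ℕ := ff m r Δ Q σ with hfdef
  set Δe : ℕ → ℕ := fun z => if z ≤ Q then f z else if z = Q+1 then σ else Δ z with hΔedef
  have hΔelow : ∀ z, z ≤ Q → Δe z = f z := by
    intro z hz
    show (if z ≤ Q then f z else if z = Q+1 then σ else Δ z) = f z
    rw [if_pos hz]
  have hΔemid : Δe (Q+1) = σ := by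
    show (if Q+1 ≤ Q then f (Q+1) else if Q+1 = Q+1 then σ else Δ (Q+1)) = σ
    rw [if_neg (by omega), if_pos rfl]
  have hΔehigh : ∀ z, Q + 2 ≤ z → Δe z = Δ z := by
    intro z hz
    show (if z ≤ Q then f z else if z = Q+1 then σ else Δ z) = Δ z
    rw [if_neg (by omega), if_neg (by omega)]
  have hΔe1 : Δe 1 = σ := by
    rw [hΔelow 1 hQ1, hfdef, ff_one m r Δ Q σ hm hr hQdef hσ1 hσr]
  have hclass : ∀ t, 1 ≤ t → t ≤ r →
      ((Finset.Icc 1 Q).filter (fun z => Δe z = t)).card = m - 1 := by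
    intro t ht1 htr
    have heq : (Finset.Icc 1 Q).filter (fun z => Δe z = t) =
        (Finset.Icc 1 Q).filter (fun z => f z = t) := by
      apply Finset.filter_congr
      intro z hz
      rw [Finset.mem_Icc] at hz
      rw [hΔelow z hz.2]
    rw [heq]
    have := class_card m r Δ Q σ hm ht1 htr
    rw [← hQdef] at this
    exact this
  refine ⟨Δe, ?_, ?_, ?_, ?_, ?_⟩
  · intro z hz
    rw [Finset.mem_Icc] at hz
    rw [Finset.mem_Icc]
    by_cases h1 : z ≤ Q
    · rw [hΔelow z h1, hfdef]
      exact ff_range m r Δ Q σ hm hz.1 (by omega)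
    · by_cases h2 : z = Q+1
      · rw [h2, hΔemid]; exact ⟨hσ1, hσr⟩
      · rw [hΔehigh z (by omega)]
        have := hΔ z (Finset.mem_Icc.mpr ⟨by omega, hz.2⟩)
        rwa [Finset.mem_Icc] at this
  · intro z hz
    rw [Finset.mem_Icc] at hz
    exact hΔehigh z hz.1
  · rintro ⟨x, y, ⟨hxmono, hxmem, hxcol⟩, ⟨hymono, hymem, hycol⟩, hxy, hgap⟩
    have hxle : ∀ i j, 1 ≤ i → i ≤ j → j ≤ m → x i ≤ x j := by
      intro i j hi hij hj
      rcases eq_or_lt_of_le hij with h | h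
      · rw [h]
      · exact (hxmono i j hi h hj).le
    have hyle : ∀ i j, 1 ≤ i → i ≤ j → j ≤ m → y i ≤ y j := by
      intro i j hi hij hj
      rcases eq_or_lt_of_le hij with h | h
      · rw [h]
      · exact (hymono i j hi h hj).le
    have hxmem' : ∀ i, 1 ≤ i → i ≤ m → 1 ≤ x i ∧ x i ≤ 2*Q := by
      intro i h1 h2
      have := hxmem i h1 h2
      rwa [Finset.mem_Icc] at this
    have hymem' : ∀ i, 1 ≤ i → i ≤ m → 1 ≤ y i ∧ y i ≤ 2*Q := by
      intro i h1 h2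
      have := hymem i h1 h2
      rwa [Finset.mem_Icc] at this
    have hym2q : y m ≤ 2*Q := (hymem' m (by omega) le_rfl).2
    have hx1m : x 1 ≤ x m := hxle 1 m le_rfl (by omega) le_rfl
    have hy1m : y 1 ≤ y m := hyle 1 m le_rfl (by omega) le_rfl
    have hinj : ∀ i ∈ Finset.Icc 1 m, ∀ j ∈ Finset.Icc 1 m, x i = x j → i = j := by
      intro i hi j hj hij
      rw [Finset.mem_Icc] at hi hj
      rcases Nat.lt_trichotomy i j with h | h | h
      · exact absurd hij (Nat.ne_of_lt (hxmono i j hi.1 h hj.2))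
      · exact h
      · exact absurd hij.symm (Nat.ne_of_lt (hxmono j i hj.1 h hi.2))
    by_cases hcaseA : Q + 2 ≤ x 1
    · apply hL
      refine ⟨x, y, ⟨hxmono, ?_, ?_⟩, ⟨hymono, ?_, ?_⟩, hxy, hgap⟩
      · intro i h1 h2
        rw [Finset.mem_Icc]
        exact ⟨le_trans hcaseA (hxle 1 i le_rfl h1 h2), (hxmem' i h1 h2).2⟩
      · intro i h1 h2
        rw [← hΔehigh (x i) (le_trans hcaseA (hxle 1 i le_rfl h1 h2)),
          ← hΔehigh (x 1) hcaseA]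
        exact hxcol i h1 h2
      · intro i h1 h2
        rw [Finset.mem_Icc]
        refine ⟨?_, (hymem' i h1 h2).2⟩
        have h3 := hyle 1 i le_rfl h1 h2
        omega
      · intro i h1 h2
        have hyi : Q + 2 ≤ y i := by
          have := hyle 1 i le_rfl h1 h2
          omega
        rw [← hΔehigh (y i) hyi, ← hΔehigh (y 1) (by omega)]
        exact hycol i h1 h2
    · push_neg at hcaseA
      obtain ⟨t, htdef⟩ : ∃ t, Δe (x 1) = t := ⟨_, rfl⟩
      have hx11 : 1 ≤ x 1 := (hxmem' 1 le_rfl (by omega)).1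
      have hxcolt : ∀ i, 1 ≤ i → i ≤ m → Δe (x i) = t := by
        intro i h1 h2
        rw [hxcol i h1 h2, htdef]
      have httr : 1 ≤ t ∧ t ≤ r := by
        by_cases h1 : x 1 ≤ Q
        · rw [← htdef, hΔelow _ h1, hfdef]
          exact ff_range m r Δ Q σ hm hx11 (by omega)
        · have hx1e : x 1 = Q + 1 := by omega
          rw [← htdef, hx1e, hΔemid]
          exact ⟨hσ1, hσr⟩
      by_cases hcaseB : x m ≤ Q + 1
      · -- X entirely within I1
        have hxall : ∀ i, 1 ≤ i → i ≤ m → x i ≤ Q + 1 :=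
          fun i h1 h2 => le_trans (hxle i m h1 h2 le_rfl) hcaseB
        have hsplit : Finset.Icc 1 (Q+1) = insert (Q+1) (Finset.Icc 1 Q) := by
          ext w
          simp only [Finset.mem_Icc, Finset.mem_insert]
          omega
        have hcardQ : ((Finset.Icc 1 Q).filter (fun z => Δe z = t)).card = m - 1 :=
          hclass t httr.1 httr.2
        have hScard : m ≤ ((Finset.Icc 1 (Q+1)).filter (fun z => Δe z = t)).card := by
          have hcIcc : (Finset.Icc 1 m).card = m := by rw [Nat.card_Icc]; omega
          rw [← hcIcc]
          apply Finset.card_le_card_of_injOn x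
          · intro i hi
            rw [Finset.mem_coe, Finset.mem_Icc] at hi
            rw [Finset.mem_coe, Finset.mem_filter, Finset.mem_Icc]
            exact ⟨⟨(hxmem' i hi.1 hi.2).1, hxall i hi.1 hi.2⟩, hxcolt i hi.1 hi.2⟩
          · intro i hi j hj hij
            rw [Finset.coe_Icc, Set.mem_Icc] at hi hj
            exact hinj i (Finset.mem_Icc.mpr hi) j (Finset.mem_Icc.mpr hj) hij
        by_cases hts : σ = t
        · have hScard2 : ((Finset.Icc 1 (Q+1)).filter (fun z => Δe z = t)).card = m := by
            rw [hsplit, Finset.filter_insert, if_pos (by rw [hΔemid]; exact hts),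
              Finset.card_insert_of_notMem (by
                rw [Finset.mem_filter, Finset.mem_Icc]
                rintro ⟨⟨-, hc⟩, -⟩
                omega)]
            omega
          have himgeq : (Finset.Icc 1 m).image x =
              (Finset.Icc 1 (Q+1)).filter (fun z => Δe z = t) := by
            apply Finset.eq_of_subset_of_card_le
            · intro w hw
              rw [Finset.mem_image] at hw
              obtain ⟨i, hi, rfl⟩ := hw
              rw [Finset.mem_Icc] at hi
              rw [Finset.mem_filter, Finset.mem_Icc]
              exact ⟨⟨(hxmem' i hi.1 hi.2).1, hxall i hi.1 hi.2⟩, hxcolt i hi.1 hi.2⟩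
            · rw [Finset.card_image_of_injOn (fun i hi j hj hij =>
                hinj i (Finset.mem_coe.mp hi) j (Finset.mem_coe.mp hj) hij)]
              rw [hScard2, Nat.card_Icc]
              omega
          have h1mem : (1:ℕ) ∈ (Finset.Icc 1 m).image x := by
            rw [himgeq, Finset.mem_filter, Finset.mem_Icc]
            refine ⟨⟨le_rfl, by omega⟩, ?_⟩
            rw [hΔe1]
            exact hts
          have hQ1mem : (Q+1) ∈ (Finset.Icc 1 m).image x := by
            rw [himgeq, Finset.mem_filter, Finset.mem_Icc]
            refine ⟨⟨by omega, le_rfl⟩, ?_⟩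
            rw [hΔemid]
            exact hts
          obtain ⟨i1, hi1, hxi1⟩ := Finset.mem_image.mp h1mem
          obtain ⟨i2, hi2, hxi2⟩ := Finset.mem_image.mp hQ1mem
          rw [Finset.mem_Icc] at hi1 hi2
          have hle1 := hxle 1 i1 le_rfl hi1.1 hi1.2
          have hle2 := hxle i2 m hi2.1 hi2.2 le_rfl
          omega
        · have hScard3 : ((Finset.Icc 1 (Q+1)).filter (fun z => Δe z = t)).card = m - 1 := by
            rw [hsplit, Finset.filter_insert, if_neg (by rw [hΔemid]; exact hts)]
            exact hcardQ
          omega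
      · -- straddle: x 1 ≤ Q+1 < Q+2 ≤ x m
        have hp2 : Q + 2 ≤ x m := by omega
        have hpm : x m ≤ 2*Q := (hxmem' m (by omega) le_rfl).2
        have hx1p : 2 * x m ≤ 2*Q + x 1 := by omega
        set A := (Finset.Icc 1 m).filter (fun i => x i ≤ Q + 1) with hAdef
        set Bs := (Finset.Icc 1 m).filter (fun i => ¬ (x i ≤ Q + 1)) with hBdef
        have hABcard : A.card + Bs.card = m := by
          rw [hAdef, hBdef, Finset.card_filter_add_card_filter_not, Nat.card_Icc]
          omega
        have h1A : (1:ℕ) ∈ A := by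
          rw [hAdef, Finset.mem_filter, Finset.mem_Icc]
          exact ⟨⟨le_rfl, by omega⟩, by omega⟩
        have hmB : m ∈ Bs := by
          rw [hBdef, Finset.mem_filter, Finset.mem_Icc]
          exact ⟨⟨by omega, le_rfl⟩, by omega⟩
        have hA1 : 1 ≤ A.card := Finset.card_pos.mpr ⟨1, h1A⟩
        have hB1 : 1 ≤ Bs.card := Finset.card_pos.mpr ⟨m, hmB⟩
        have hjn : Bs.card ≤ cnt Δ Q t (x m) := by
          unfold cnt
          apply Finset.card_le_card_of_injOn x
          · intro i hi
            rw [hBdef, Finset.mem_coe, Finset.mem_filter, Finset.mem_Icc] at hi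
            obtain ⟨⟨hi1, him⟩, hiB⟩ := hi
            rw [Finset.mem_coe, Finset.mem_filter, Finset.mem_Icc]
            refine ⟨⟨by omega, hxle i m hi1 him le_rfl⟩, ?_⟩
            rw [← hΔehigh (x i) (by omega)]
            exact hxcolt i hi1 him
          · intro i hi j hj hij
            have hi' := Finset.mem_coe.mp hi
            have hj' := Finset.mem_coe.mp hj
            rw [hBdef, Finset.mem_filter] at hi' hj'
            exact hinj i hi'.1 j hj'.1 hij
        have hsplitQ : ∀ v, 1 ≤ v → v ≤ Q + 1 →
            ((Finset.Icc 1 (v-1)).filter (fun z => Δe z = t)).card +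
            ((Finset.Icc v Q).filter (fun z => Δe z = t)).card = m - 1 := by
          intro v hv1 hv2
          rw [← hclass t httr.1 httr.2]
          have hdisj : Disjoint ((Finset.Icc 1 (v-1)).filter (fun z => Δe z = t))
              ((Finset.Icc v Q).filter (fun z => Δe z = t)) := by
            rw [Finset.disjoint_left]
            intro a ha hb
            rw [Finset.mem_filter, Finset.mem_Icc] at ha hb
            omega
          have hicc : Finset.Icc 1 Q = Finset.Icc 1 (v-1) ∪ Finset.Icc v Q := by
            ext w
            simp only [Finset.mem_union, Finset.mem_Icc]
            omega
          rw [hicc, Finset.filter_union, Finset.card_union_of_disjoint hdisj]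
        by_cases hts : σ = t
        · -- special color
          have hcnt2 : cnt Δ Q t (x m) ≤ m - 2 := by
            have h1 : cnt Δ Q t (x m) ≤ cnt Δ Q t (2*Q) := cnt_mono Δ Q t hpm
            have hσc' : cnt Δ Q t (2*Q) ≤ m - 2 := by rw [← hts]; exact hσc
            omega
          by_cases hx1Q : x 1 ≤ Q
          · -- x1 in [1,Q]
            have hn1 : 1 ≤ cnt Δ Q t (x m) := le_trans hB1 hjn
            have hnm : cnt Δ Q t (x m) + 1 ≤ m - 1 := by omega
            have hkey : key Δ Q σ σ (cnt Δ Q t (x m) + 1) ≤ x 1 - 1 := by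
              unfold key
              rw [if_pos rfl, if_neg (by omega),
                if_pos (show cnt Δ Q t (x m) + 1 - 1 ≤ cnt Δ Q σ (2*Q) by
                  have h1 : cnt Δ Q t (x m) ≤ cnt Δ Q t (2*Q) := cnt_mono Δ Q t hpm
                  rw [← hts] at h1 ⊢
                  omega)]
              have he : cnt Δ Q t (x m) + 1 - 1 = cnt Δ Q t (x m) := by omega
              rw [he, ← hts]
              have haale : aa Δ Q σ (cnt Δ Q σ (x m)) ≤ x m := by
                apply aa_le
                rw [hts]
              have hge : Q + 2 ≤ aa Δ Q σ (cnt Δ Q σ (x m)) := by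
                refine (aa_spec Δ Q σ (p := x m) ?_ ?_).1
                · rw [hts]; omega
                · rw [hts]
              have hminle : min Q (2 * aa Δ Q σ (cnt Δ Q σ (x m)) - (2*Q+1)) ≤
                  2 * aa Δ Q σ (cnt Δ Q σ (x m)) - (2*Q+1) := min_le_right _ _
              omega
            have hcount := count_ge m r Δ Q σ hm hQdef hσ1 hσr hσ1 hσr
              (show 1 ≤ cnt Δ Q t (x m) + 1 by omega) (by omega) hkey
              (show (x 1 - 1) + 1 ≤ Q by omega)
            have hconv : ((Finset.Icc 1 (x 1 - 1)).filter (fun z => ff m r Δ Q σ z = σ)) =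
                ((Finset.Icc 1 (x 1 - 1)).filter (fun z => Δe z = t)) := by
              apply Finset.filter_congr
              intro z hz
              rw [Finset.mem_Icc] at hz
              rw [hΔelow z (by omega), hfdef, ← hts]
            rw [hconv] at hcount
            have hAcard : A.card ≤
                ((Finset.Icc (x 1) Q).filter (fun z => Δe z = t)).card + 1 := by
              have hins : (Finset.Icc (x 1) (Q+1)).filter (fun z => Δe z = t) =
                  insert (Q+1) ((Finset.Icc (x 1) Q).filter (fun z => Δe z = t)) := by
                rw [show Finset.Icc (x 1) (Q+1) = insert (Q+1) (Finset.Icc (x 1) Q) from by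
                  ext w
                  simp only [Finset.mem_Icc, Finset.mem_insert]
                  omega, Finset.filter_insert, if_pos (by rw [hΔemid]; exact hts)]
              have hc1 : A.card ≤ ((Finset.Icc (x 1) (Q+1)).filter (fun z => Δe z = t)).card := by
                apply Finset.card_le_card_of_injOn x
                · intro i hi
                  rw [hAdef, Finset.mem_coe, Finset.mem_filter, Finset.mem_Icc] at hi
                  obtain ⟨⟨hi1, him⟩, hiA⟩ := hi
                  rw [Finset.mem_coe, Finset.mem_filter, Finset.mem_Icc]
                  exact ⟨⟨hxle 1 i le_rfl hi1 him, hiA⟩, hxcolt i hi1 him⟩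
                · intro i hi j hj hij
                  have hi' := Finset.mem_coe.mp hi
                  have hj' := Finset.mem_coe.mp hj
                  rw [hAdef, Finset.mem_filter] at hi' hj'
                  exact hinj i hi'.1 j hj'.1 hij
              have hc2 : ((Finset.Icc (x 1) (Q+1)).filter (fun z => Δe z = t)).card =
                  ((Finset.Icc (x 1) Q).filter (fun z => Δe z = t)).card + 1 := by
                rw [hins, Finset.card_insert_of_notMem (by
                  rw [Finset.mem_filter, Finset.mem_Icc]
                  rintro ⟨⟨-, hc⟩, -⟩
                  omega)]
              omega
            have hsp := hsplitQ (x 1) (by omega) (by omega)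
            omega
          · -- x1 = Q+1
            have hx1e : x 1 = Q + 1 := by omega
            have hAone : A.card ≤ 1 := by
              have : A.card ≤ ({Q+1} : Finset ℕ).card := by
                apply Finset.card_le_card_of_injOn x
                · intro i hi
                  rw [hAdef, Finset.mem_coe, Finset.mem_filter, Finset.mem_Icc] at hi
                  obtain ⟨⟨hi1, him⟩, hiA⟩ := hi
                  have := hxle 1 i le_rfl hi1 him
                  rw [Finset.mem_coe, Finset.mem_singleton]
                  omega
                · intro i hi j hj hij
                  have hi' := Finset.mem_coe.mp hi
                  have hj' := Finset.mem_coe.mp hj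
                  rw [hAdef, Finset.mem_filter] at hi' hj'
                  exact hinj i hi'.1 j hj'.1 hij
              rwa [Finset.card_singleton] at this
            omega
        · -- ordinary color
          have hx1Q : x 1 ≤ Q := by
            by_contra hc
            have hx1e : x 1 = Q + 1 := by omega
            rw [← htdef, hx1e, hΔemid] at hts
            exact hts rfl
          have hn1 : 1 ≤ cnt Δ Q t (x m) := le_trans hB1 hjn
          have hucnt : min (cnt Δ Q t (x m)) (m-1) ≤ cnt Δ Q t (2*Q) :=
            le_trans (min_le_left _ _) (cnt_mono Δ Q t hpm)
          have hu1 : 1 ≤ min (cnt Δ Q t (x m)) (m-1) := le_min (by omega) (by omega)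
          have hkey : key Δ Q σ t (min (cnt Δ Q t (x m)) (m-1)) ≤ x 1 - 1 := by
            unfold key
            rw [if_neg (by intro h; exact hts h.symm), if_pos hucnt]
            have haale : aa Δ Q t (min (cnt Δ Q t (x m)) (m-1)) ≤ x m :=
              aa_le Δ Q t (min_le_left _ _)
            have hge : Q + 2 ≤ aa Δ Q t (min (cnt Δ Q t (x m)) (m-1)) :=
              (aa_spec Δ Q t hu1 (min_le_left _ _)).1
            have hminle : min Q (2 * aa Δ Q t (min (cnt Δ Q t (x m)) (m-1)) - (2*Q+1)) ≤
                2 * aa Δ Q t (min (cnt Δ Q t (x m)) (m-1)) - (2*Q+1) := min_le_right _ _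
            omega
          have hcount := count_ge m r Δ Q σ hm hQdef hσ1 hσr httr.1 httr.2
            hu1 (min_le_right _ _) hkey (show (x 1 - 1) + 1 ≤ Q by omega)
          have hconv : ((Finset.Icc 1 (x 1 - 1)).filter (fun z => ff m r Δ Q σ z = t)) =
              ((Finset.Icc 1 (x 1 - 1)).filter (fun z => Δe z = t)) := by
            apply Finset.filter_congr
            intro z hz
            rw [Finset.mem_Icc] at hz
            rw [hΔelow z (by omega), hfdef]
          rw [hconv] at hcount
          have hAcard : A.card ≤ ((Finset.Icc (x 1) Q).filter (fun z => Δe z = t)).card := by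
            apply Finset.card_le_card_of_injOn x
            · intro i hi
              rw [hAdef, Finset.mem_coe, Finset.mem_filter, Finset.mem_Icc] at hi
              obtain ⟨⟨hi1, him⟩, hiA⟩ := hi
              rw [Finset.mem_coe, Finset.mem_filter, Finset.mem_Icc]
              have hcol : Δe (x i) = t := hxcolt i hi1 him
              have hxine : x i ≠ Q + 1 := by
                intro hc
                rw [hc, hΔemid] at hcol
                exact hts hcol
              exact ⟨⟨hxle 1 i le_rfl hi1 him, by omega⟩, hcol⟩
            · intro i hi j hj hij
              have hi' := Finset.mem_coe.mp hi
              have hj' := Finset.mem_coe.mp hj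
              rw [hAdef, Finset.mem_filter] at hi' hj'
              exact hinj i hi'.1 j hj'.1 hij
          have hsp := hsplitQ (x 1) (by omega) (by omega)
          have hBu : Bs.card ≤ min (cnt Δ Q t (x m)) (m-1) := le_min hjn (by omega)
          omega
  · rw [hΔe1, hΔemid]
  · intro t ht
    rw [Finset.mem_Icc] at ht
    exact hclass t ht.1 ht.2
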